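/- arXiv:1911.09650 — 5 statements merged into one kernel-verified Lean document; each statement's English description precedes it below -/
import Mathlib

section
/- Let k ≥ 1. Any finite simple graph on n vertices with at least n·k edges contains a path on k+1 vertices (i.e., a path of length k). -/
open SimpleGraph

variable {V : Type} [Fintype V] [DecidableEq V]

/-- Edges of `G` with both endpoints in `S`. -/
def edgesWithin (G : SimpleGraph V) [DecidableRel G.Adj] (S : Finset V) : Finset (Sym2 V) :=
  G.edgeFinset.filter (fun e => ∀ x ∈ e, x ∈ S)

lemma edgesWithin_erase (G : SimpleGraph V) [DecidableRel G.Adj] (S : Finset V) (v : V) :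
    (edgesWithin G S).card ≤
      (edgesWithin G (S.erase v)).card + (G.neighborFinset v ∩ S).card := by
  have hsub : edgesWithin G S ⊆
      edgesWithin G (S.erase v) ∪ (G.neighborFinset v ∩ S).image (fun w => s(v, w)) := by
    intro e he
    rw [edgesWithin, Finset.mem_filter] at he
    obtain ⟨heG, hes⟩ := he
    by_cases hv : v ∈ e
    · refine Finset.mem_union_right _ ?_
      induction e with
      | h a b =>
        rw [Sym2.mem_iff] at hv
        have hadj : G.Adj a b := (G.mem_edgeFinset).1 heG
        rcases hv with rfl | rfl
        · exact Finset.mem_image.2 ⟨b, Finset.mem_inter.2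
            ⟨(G.mem_neighborFinset _ _).2 hadj, hes b (Sym2.mem_mk_right _ _)⟩, rfl⟩
        · refine Finset.mem_image.2 ⟨a, Finset.mem_inter.2
            ⟨(G.mem_neighborFinset _ _).2 hadj.symm, hes a (Sym2.mem_mk_left _ _)⟩, ?_⟩
          exact Sym2.eq_swap
    · refine Finset.mem_union_left _ ?_
      rw [edgesWithin, Finset.mem_filter]
      refine ⟨heG, fun x hx => Finset.mem_erase.2 ⟨?_, hes x hx⟩⟩
      rintro rfl; exact hv hx
  calc (edgesWithin G S).card ≤ _ := Finset.card_le_card hsub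
    _ ≤ (edgesWithin G (S.erase v)).card +
        ((G.neighborFinset v ∩ S).image (fun w => s(v, w))).card := Finset.card_union_le _ _
    _ ≤ _ := by gcongr; exact Finset.card_image_le

lemma edgesWithin_nonempty (G : SimpleGraph V) [DecidableRel G.Adj] {S : Finset V}
    (h : (edgesWithin G S).Nonempty) : S.Nonempty := by
  obtain ⟨e, he⟩ := h
  rw [edgesWithin, Finset.mem_filter] at he
  induction e with
  | h a b => exact ⟨a, he.2 a (Sym2.mem_mk_left _ _)⟩
variable {V : Type} [Fintype V] [DecidableEq V]

/-- Greedy path extension: if every vertex of `S` has at least `k` neighbors inside `S`,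
then for every `t ≤ k` there is a path of length `t` with support in `S`. -/
lemma greedy (G : SimpleGraph V) [DecidableRel G.Adj] (S : Finset V) (hS : S.Nonempty) (k : ℕ)
    (hdeg : ∀ v ∈ S, k ≤ (G.neighborFinset v ∩ S).card) :
    ∀ t, t ≤ k → ∃ (u w : V) (p : G.Walk u w), p.IsPath ∧ p.length = t ∧
      ∀ x ∈ p.support, x ∈ S := by
  intro t
  induction t with
  | zero =>
    intro _
    obtain ⟨u, hu⟩ := hS
    exact ⟨u, u, Walk.nil, Walk.IsPath.nil, rfl, by simp [hu]⟩
  | succ t ih =>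
    intro ht
    obtain ⟨u, w, p, hp, hlen, hsupp⟩ := ih (Nat.le_of_succ_le ht)
    -- find a neighbor of u in S outside the support
    have huS : u ∈ S := hsupp u p.start_mem_support
    set A := G.neighborFinset u ∩ S with hA
    have hcardA : k ≤ A.card := hdeg u huS
    have hsuppcard : p.support.toFinset.card ≤ t + 1 := by
      calc p.support.toFinset.card ≤ p.support.length := List.toFinset_card_le _
        _ = t + 1 := by rw [p.length_support, hlen]
    have huA : u ∉ A := by
      simp [hA, G.irrefl]
    have hsub : A ∩ p.support.toFinset ⊆ p.support.toFinset.erase u := by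
      intro x hx
      simp only [Finset.mem_inter] at hx
      refine Finset.mem_erase.2 ⟨?_, hx.2⟩
      rintro rfl; exact huA hx.1
    have h1 : (A ∩ p.support.toFinset).card ≤ t := by
      have he := Finset.card_erase_of_mem (List.mem_toFinset.2 p.start_mem_support)
      have := Finset.card_le_card hsub
      omega
    have h2 : 1 ≤ (A \ p.support.toFinset).card := by
      have := Finset.card_inter_add_card_sdiff A p.support.toFinset
      omega
    obtain ⟨x, hx⟩ := Finset.card_pos.mp (by omega : 0 < (A \ p.support.toFinset).card)
    rw [Finset.mem_sdiff] at hx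
    obtain ⟨hxA, hxns⟩ := hx
    rw [hA, Finset.mem_inter, G.mem_neighborFinset] at hxA
    have hadj : G.Adj x u := hxA.1.symm
    refine ⟨x, w, Walk.cons hadj p, ?_, ?_, ?_⟩
    · rw [Walk.cons_isPath_iff]
      exact ⟨hp, fun hmem => hxns (List.mem_toFinset.2 hmem)⟩
    · simp [hlen]
    · intro y hy
      rw [Walk.support_cons, List.mem_cons] at hy
      rcases hy with rfl | hy
      · exact hxA.2
      · exact hsupp y hy
lemma main_ind (G : SimpleGraph V) [DecidableRel G.Adj] (k : ℕ) (hk : 1 ≤ k) :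
    ∀ S : Finset V, S.Nonempty → S.card * k ≤ (edgesWithin G S).card →
      ∃ (u w : V) (p : G.Walk u w), p.IsPath ∧ p.length = k := by
  intro S
  induction S using Finset.strongInductionOn with
  | _ S ih =>
    intro hS hcard
    by_cases hmin : ∀ v ∈ S, k ≤ (G.neighborFinset v ∩ S).card
    · obtain ⟨u, w, p, hp, hlen, _⟩ := greedy G S hS k hmin k le_rfl
      exact ⟨u, w, p, hp, hlen⟩
    · push_neg at hmin
      obtain ⟨v, hv, hdeg⟩ := hmin
      have hbound := edgesWithin_erase G S v
      have hS1 : 1 ≤ S.card := Finset.card_pos.2 hS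
      have hScard : (S.erase v).card = S.card - 1 := Finset.card_erase_of_mem hv
      have hmul : (S.card - 1) * k = S.card * k - k := by rw [Nat.sub_one_mul]
      have hk2 : k ≤ S.card * k := Nat.le_mul_of_pos_left k hS1
      have hE' : (S.card - 1) * k + 1 ≤ (edgesWithin G (S.erase v)).card := by omega
      have hne : (S.erase v).Nonempty := by
        apply edgesWithin_nonempty G
        rw [← Finset.card_pos]
        omega
      exact ih (S.erase v) (Finset.erase_ssubset hv) hne (by rw [hScard]; omega)

/-- Let `k ≥ 1`. Any finite simple graph on `n ≥ 1` vertices with at least `n·k`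
edges contains a path on `k + 1` vertices, i.e. a path of length `k`. -/
theorem exists_path_of_many_edges {V : Type} [Fintype V] [Nonempty V] [DecidableEq V]
    (G : SimpleGraph V) [DecidableRel G.Adj] (k : ℕ) (hk : 1 ≤ k)
    (h : Fintype.card V * k ≤ G.edgeFinset.card) :
    ∃ (u w : V) (p : G.Walk u w), p.IsPath ∧ p.length = k := by
  apply main_ind G k hk Finset.univ Finset.univ_nonempty
  have : edgesWithin G Finset.univ = G.edgeFinset := by
    rw [edgesWithin, Finset.filter_true_of_mem]
    intro e _ x _
    exact Finset.mem_univ x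
  rw [this, Finset.card_univ]
  exact h
end

section
/- Let N ≥ 1, let W = {w_1,…,w_N} and X = {x_1,…,x_N} be disjoint vertex sets, and let δ be a permutation of {1,…,N}. Let M be the simple graph on W ∪ X whose edges are exactly {w_i, x_{δ(i)}} for each i ∈ {1,…,N} (a perfect matching). Fix j ∈ {1,…,N} and S ⊆ X, and let G' be obtained from M by adding a new vertex v adjacent to w_j and to every vertex of S. Then G' contains a cycle if and only if x_{δ(j)} ∈ S. -/
open SimpleGraph

/-- Let `N ≥ 1`, let `W = {w 1, …, w N}` and `X = {x 1, …, x N}` be disjoint vertex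
sets, and `δ` a permutation of `{1,…,N}`. Let `M` be the perfect matching graph with
edges `{w i, x (δ i)}`. Fix `j` and `S ⊆ X`, and let `G'` be obtained from `M` by
adding a new vertex `v` adjacent to `w j` and to every vertex of `S`. Then `G'`
contains a cycle iff `x (δ j) ∈ S`. -/
theorem matching_plus_star_cycle_iff {V : Type} [Fintype V] (N : ℕ) (hN : 1 ≤ N)
    (w x : Fin N → V) (hw : Function.Injective w) (hx : Function.Injective x)
    (hwx : Disjoint (Set.range w) (Set.range x))
    (δ : Equiv.Perm (Fin N)) (M : SimpleGraph V)
    (hM : ∀ a b : V, M.Adj a b ↔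
      ∃ i : Fin N, (a = w i ∧ b = x (δ i)) ∨ (b = w i ∧ a = x (δ i)))
    (j : Fin N) (S : Set V) (hS : S ⊆ Set.range x)
    (v : V) (hv : v ∉ Set.range w ∪ Set.range x)
    (hcover : Set.range w ∪ Set.range x ∪ {v} = Set.univ)
    (G' : SimpleGraph V)
    (hG' : ∀ a b : V, G'.Adj a b ↔
      M.Adj a b ∨ (a = v ∧ (b = w j ∨ b ∈ S)) ∨ (b = v ∧ (a = w j ∨ a ∈ S))) :
    (∃ (a : V) (p : G'.Walk a a), p.IsCycle) ↔ x (δ j) ∈ S := by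
  classical
  -- basic distinctness facts
  have hvw : ∀ i, v ≠ w i := fun i h => hv (Or.inl ⟨i, h.symm⟩)
  have hvx : ∀ k, v ≠ x k := fun k h => hv (Or.inr ⟨k, h.symm⟩)
  have hwxne : ∀ i k, w i ≠ x k := fun i k h =>
    Set.disjoint_left.mp hwx ⟨i, rfl⟩ (h ▸ ⟨k, rfl⟩)
  -- matching uniqueness
  have Muniq : ∀ b a c : V, M.Adj b a → M.Adj b c → a = c := by
    intro b a c h1 h2
    obtain ⟨i, hi⟩ := (hM b a).mp h1
    obtain ⟨i', hi'⟩ := (hM b c).mp h2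
    rcases hi with ⟨hb, ha⟩ | ⟨ha, hb⟩ <;> rcases hi' with ⟨hb', hc⟩ | ⟨hc, hb'⟩
    · obtain rfl : i = i' := hw (hb.symm.trans hb')
      exact ha.trans hc.symm
    · exact absurd (hb.symm.trans hb') (hwxne _ _)
    · exact absurd (hb'.symm.trans hb) (hwxne _ _)
    · obtain rfl : i = i' := δ.injective (hx (hb.symm.trans hb'))
      exact ha.trans hc.symm
  -- no M-edge at v
  have Mv : ∀ b : V, ¬ M.Adj v b := by
    intro b h
    obtain ⟨i, hi⟩ := (hM v b).mp h
    rcases hi with ⟨h1, _⟩ | ⟨_, h1⟩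
    · exact hvw i h1
    · exact hvx (δ i) h1
  -- edges avoiding v are M-edges
  have adjM : ∀ a b : V, G'.Adj a b → a ≠ v → b ≠ v → M.Adj a b := by
    intro a b h ha hb
    rcases (hG' a b).mp h with h | ⟨h1, _⟩ | ⟨h1, _⟩
    · exact h
    · exact absurd h1 ha
    · exact absurd h1 hb
  constructor
  · rintro ⟨a, p, hp⟩
    by_cases hvs : v ∈ p.support
    · -- rotate to start at v
      have hp' := hp.rotate hvs
      set p' := p.rotate v hvs with hp'def
      clear_value p'
      clear hp'def hp hvs p
      cases p' with
      | nil => exact absurd rfl hp'.ne_nil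
      | cons h₁ q =>
        rename_i b
        have hbv : b ≠ v := h₁.ne'
        have hnd : (q.support : List V).Nodup := by
          simpa using hp'.support_nodup
        -- b is a star-neighbor of v
        have hb : b = w j ∨ b ∈ S := by
          rcases (hG' v b).mp h₁ with h | ⟨_, h2⟩ | ⟨h1, _⟩
          · exact absurd h (Mv b)
          · exact h2
          · exact absurd h1 hbv
        cases q with
        | nil => exact absurd rfl hbv
        | cons h₂ r =>
          rename_i c
          have hlen : 3 ≤ (Walk.cons h₁ (Walk.cons h₂ r)).length := hp'.three_le_length
          have hndr : (r.support : List V).Nodup ∧ b ∉ r.support := by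
            simp only [Walk.support_cons, List.nodup_cons] at hnd
            exact ⟨hnd.2, hnd.1⟩
          have hcv : c ≠ v := by
            rintro rfl
            -- r : Walk v v with nodup support, hence nil, length = 2 < 3
            have : r = Walk.nil := (Walk.isPath_iff_eq_nil (p := r)).mp (Walk.IsPath.mk' hndr.1)
            subst this
            simp at hlen
          have hMbc : M.Adj b c := adjM b c h₂ hbv hcv
          cases r with
          | nil => exact absurd rfl hcv
          | cons h₃ s =>
            rename_i d
            have hc : c = w j ∨ c ∈ S := by
              rcases (hG' c d).mp h₃ with h | ⟨h1, _⟩ | ⟨_, h2⟩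
              · -- M-edge c-d forces d = b, contradicting nodup
                exfalso
                have : b = d := Muniq c b d hMbc.symm h
                apply hndr.2
                rw [this, Walk.support_cons]
                exact List.mem_cons_of_mem _ s.start_mem_support
              · exact absurd h1 hcv
              · exact h2
            -- now conclude
            rcases hb with rfl | hbS
            · -- b = w j, so c = x (δ j)
              have : c = x (δ j) := by
                have hwj : M.Adj (w j) (x (δ j)) := (hM _ _).mpr ⟨j, Or.inl ⟨rfl, rfl⟩⟩
                exact Muniq _ c (x (δ j)) hMbc hwj
              subst this
              rcases hc with h | h
              · exact absurd h.symm (hwxne _ _)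
              · exact h
            · -- b ∈ S, so b = x k, c = w (δ⁻¹ k)
              obtain ⟨k, rfl⟩ := hS hbS
              obtain ⟨i, hi⟩ := (hM (x k) c).mp hMbc
              rcases hi with ⟨h1, _⟩ | ⟨hc', hk⟩
              · exact absurd h1.symm (hwxne _ _)
              · rcases hc with h | h
                · have hij : i = j := hw (hc'.symm.trans h)
                  have hk' : k = δ j := hij ▸ hx hk
                  exact hk' ▸ hbS
                · exact absurd (hS (hc' ▸ h)) (by
                    rintro ⟨m, hm⟩
                    exact hwxne i m hm.symm)
    · -- cycle avoiding v lies in the matching M: impossible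
      exfalso
      cases p with
      | nil => exact absurd rfl hp.ne_nil
      | cons h₁ q =>
        rename_i b
        have hav : a ≠ v := fun h => hvs (h ▸ Walk.start_mem_support _)
        have hbv : b ≠ v := by
          intro h
          apply hvs
          rw [Walk.support_cons]
          exact List.mem_cons_of_mem _ (h ▸ q.start_mem_support)
        have hMab : M.Adj a b := adjM a b h₁ hav hbv
        have hnd : (q.support : List V).Nodup := by
          simpa using hp.support_nodup
        cases q with
        | nil => exact h₁.ne rfl
        | cons h₂ r =>
          rename_i c
          have hlen : 3 ≤ (Walk.cons h₁ (Walk.cons h₂ r)).length := hp.three_le_length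
          have hcv : c ≠ v := by
            intro h
            apply hvs
            rw [Walk.support_cons, Walk.support_cons]
            exact List.mem_cons_of_mem _ (List.mem_cons_of_mem _ (h ▸ r.start_mem_support))
          have hMbc : M.Adj b c := adjM b c h₂ hbv hcv
          have hac : a = c := Muniq b a c hMab.symm hMbc
          subst hac
          have hndr : (r.support : List V).Nodup := by
            simp only [Walk.support_cons, List.nodup_cons] at hnd
            exact hnd.2
          have : r = Walk.nil := (Walk.isPath_iff_eq_nil (p := r)).mp (Walk.IsPath.mk' hndr)
          subst this
          simp at hlen
  · intro hx'
    have e1 : G'.Adj v (w j) := (hG' v (w j)).mpr (Or.inr (Or.inl ⟨rfl, Or.inl rfl⟩))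
    have e2 : G'.Adj (w j) (x (δ j)) := (hG' _ _).mpr (Or.inl ((hM _ _).mpr ⟨j, Or.inl ⟨rfl, rfl⟩⟩))
    have e3 : G'.Adj (x (δ j)) v := (hG' _ _).mpr (Or.inr (Or.inr ⟨rfl, Or.inr hx'⟩))
    refine ⟨v, Walk.cons e1 (Walk.cons e2 (Walk.cons e3 Walk.nil)), ?_⟩
    simp [Walk.isCycle_def, Walk.isTrail_def, hvw j, hvx (δ j), hwxne j (δ j),
      (hvw j).symm, (hvx (δ j)).symm, (hwxne j (δ j)).symm, Sym2.eq, Sym2.rel_iff']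
end

section
/- Let N ≥ 1, let W = {w_1,…,w_N} and X = {x_1,…,x_N} be disjoint vertex sets, and let δ be a permutation of {1,…,N}. Let M be the simple graph on W ∪ X whose edges are exactly {w_i, x_{δ(i)}} for each i ∈ {1,…,N} (a perfect matching). Fix j ∈ {1,…,N} and S ⊆ X with |S| ≥ 2, and let G' be obtained from M by adding two new vertices v and y, where v is adjacent only to w_j and y is adjacent exactly to every vertex of S. Then G' contains a path of length 5 (a path on 6 vertices) if and only if x_{δ(j)} ∈ S. -/
open SimpleGraph

/-- Let `N ≥ 1`, `W`, `X` disjoint vertex sets of size `N`, `δ` a permutation, and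
`M` the perfect matching with edges `{w i, x (δ i)}`. Fix `j` and `S ⊆ X` with
`|S| ≥ 2`, and let `G'` be obtained from `M` by adding two new vertices `v`, `y`,
where `v` is adjacent only to `w j` and `y` is adjacent exactly to every vertex of
`S`. Then `G'` contains a path of length 5 (a path on 6 vertices) iff
`x (δ j) ∈ S`. -/
theorem matching_plus_two_stars_path_iff {V : Type} [Fintype V] [DecidableEq V]
    (N : ℕ) (hN : 1 ≤ N)
    (w x : Fin N → V) (hw : Function.Injective w) (hx : Function.Injective x)
    (hwx : Disjoint (Set.range w) (Set.range x))
    (δ : Equiv.Perm (Fin N)) (M : SimpleGraph V)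
    (hM : ∀ a b : V, M.Adj a b ↔
      ∃ i : Fin N, (a = w i ∧ b = x (δ i)) ∨ (b = w i ∧ a = x (δ i)))
    (j : Fin N) (S : Finset V) (hS : (S : Set V) ⊆ Set.range x) (hScard : 2 ≤ S.card)
    (v y : V) (hv : v ∉ Set.range w ∪ Set.range x) (hy : y ∉ Set.range w ∪ Set.range x)
    (hvy : v ≠ y)
    (hcover : Set.range w ∪ Set.range x ∪ {v, y} = Set.univ)
    (G' : SimpleGraph V)
    (hG' : ∀ a b : V, G'.Adj a b ↔
      M.Adj a b ∨ (a = v ∧ b = w j) ∨ (b = v ∧ a = w j) ∨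
        (a = y ∧ b ∈ S) ∨ (b = y ∧ a ∈ S)) :
    (∃ (a b : V) (p : G'.Walk a b), p.IsPath ∧ p.length = 5) ↔ x (δ j) ∈ S := by
  have hvW : v ∉ Set.range w := fun h => hv (Or.inl h)
  have hvX : v ∉ Set.range x := fun h => hv (Or.inr h)
  have hyW : y ∉ Set.range w := fun h => hy (Or.inl h)
  have hyX : y ∉ Set.range x := fun h => hy (Or.inr h)
  have hwx' : ∀ i i' : Fin N, w i ≠ x i' :=
    fun i i' h => Set.disjoint_left.mp hwx ⟨i, rfl⟩ ⟨i', h.symm⟩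
  have hSx : ∀ u ∈ S, ∃ i : Fin N, u = x (δ i) := by
    intro u hu
    obtain ⟨k, hk⟩ := hS hu
    exact ⟨δ.symm k, by simp [hk]⟩
  have hSnW : ∀ u ∈ S, ∀ i : Fin N, u ≠ w i := by
    intro u hu i h
    obtain ⟨k, hk⟩ := hS hu
    exact hwx' i k (h.symm.trans hk.symm)
  have hyS : y ∉ S := fun h => hyX (hS h)
  have hvS : v ∉ S := fun h => hvX (hS h)
  have nbr : ∀ u z : V, G'.Adj u z →
      (∃ i, u = w i ∧ (z = x (δ i) ∨ (i = j ∧ z = v))) ∨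
      (∃ i, u = x (δ i) ∧ (z = w i ∨ (u ∈ S ∧ z = y))) ∨
      (u = v ∧ z = w j) ∨ (u = y ∧ z ∈ S) := by
    intro u z hadj
    rw [hG'] at hadj
    rcases hadj with h | ⟨h1, h2⟩ | ⟨h1, h2⟩ | ⟨h1, h2⟩ | ⟨h1, h2⟩
    · rw [hM] at h
      obtain ⟨i, h | h⟩ := h
      · exact Or.inl ⟨i, h.1, Or.inl h.2⟩
      · exact Or.inr (Or.inl ⟨i, h.2, Or.inl h.1⟩)
    · exact Or.inr (Or.inr (Or.inl ⟨h1, h2⟩))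
    · exact Or.inl ⟨j, h2, Or.inr ⟨rfl, h1⟩⟩
    · exact Or.inr (Or.inr (Or.inr ⟨h1, h2⟩))
    · obtain ⟨i, hi⟩ := hSx u h2
      exact Or.inr (Or.inl ⟨i, hi, Or.inr ⟨h2, h1⟩⟩)
  constructor
  · rintro ⟨a, b, p, hp, hlen⟩
    by_contra hnot
    have classify : ∀ u z z' : V, G'.Adj u z → G'.Adj u z' → z ≠ z' →
        u = y ∨ u = w j ∨ u ∈ S := by
      intro u z z' h1 h2 hzz
      rcases nbr u z h1 with ⟨i, hu, hz⟩ | ⟨i, hu, hz⟩ | ⟨hu, hz⟩ | ⟨hu, _⟩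
      · rcases nbr u z' h2 with ⟨i', hu', hz'⟩ | ⟨i', hu', _⟩ | ⟨hu', _⟩ | ⟨hu', _⟩
        · have : i = i' := hw (hu.symm.trans hu')
          subst this
          rcases hz with hz | ⟨rfl, _⟩
          · rcases hz' with hz' | ⟨rfl, _⟩
            · exact absurd (hz.trans hz'.symm) hzz
            · exact Or.inr (Or.inl hu)
          · exact Or.inr (Or.inl hu)
        · exact absurd (hu.symm.trans hu') (hwx' i (δ i'))
        · exact absurd (hu.symm.trans hu') (fun h => hvW ⟨i, h⟩)
        · exact absurd (hu.symm.trans hu') (fun h => hyW ⟨i, h⟩)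
      · rcases nbr u z' h2 with ⟨i', hu', _⟩ | ⟨i', hu', hz'⟩ | ⟨hu', _⟩ | ⟨hu', _⟩
        · exact absurd (hu'.symm.trans hu) (hwx' i' (δ i))
        · have : δ i = δ i' := hx (hu.symm.trans hu')
          have hii : i = i' := δ.injective this
          subst hii
          rcases hz with hz | ⟨hmem, _⟩
          · rcases hz' with hz' | ⟨hmem, _⟩
            · exact absurd (hz.trans hz'.symm) hzz
            · exact Or.inr (Or.inr hmem)
          · exact Or.inr (Or.inr hmem)
        · exact absurd (hu.symm.trans hu') (fun h => hvX ⟨δ i, h⟩)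
        · exact absurd (hu.symm.trans hu') (fun h => hyX ⟨δ i, h⟩)
      · rcases nbr u z' h2 with ⟨i', hu', _⟩ | ⟨i', hu', _⟩ | ⟨_, hz'⟩ | ⟨hu', _⟩
        · exact absurd (hu.symm.trans hu') (fun h => hvW ⟨i', h.symm⟩)
        · exact absurd (hu.symm.trans hu') (fun h => hvX ⟨δ i', h.symm⟩)
        · exact absurd (hz.trans hz'.symm) hzz
        · exact absurd (hu.symm.trans hu') hvy
      · exact Or.inl hu
    have noSS : ∀ u z : V, u ∈ S → z ∈ S → ¬ G'.Adj u z := by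
      intro u z hu hz hadj
      rcases nbr u z hadj with ⟨i, hu', _⟩ | ⟨i, _, hz'⟩ | ⟨hu', _⟩ | ⟨hu', _⟩
      · exact hSnW u hu i hu'
      · rcases hz' with hz' | ⟨_, hz'⟩
        · exact hSnW z hz i hz'
        · exact hyS (hz' ▸ hz)
      · exact hvS (hu' ▸ hu)
      · exact hyS (hu' ▸ hu)
    have wj_nbr : ∀ u : V, G'.Adj (w j) u → u ∉ S ∧ u ≠ y := by
      intro u hadj
      rcases nbr (w j) u hadj with ⟨i, hji, hu⟩ | ⟨i, hji, _⟩ | ⟨hji, _⟩ | ⟨hji, _⟩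
      · have hij : j = i := hw hji
        subst hij
        rcases hu with rfl | ⟨_, rfl⟩
        · exact ⟨hnot, fun h => hyX ⟨δ j, h⟩⟩
        · exact ⟨hvS, hvy⟩
      · exact absurd hji (hwx' j (δ i))
      · exact absurd hji (fun h => hvW ⟨j, h⟩)
      · exact absurd hji (fun h => hyW ⟨j, h⟩)
    have key : ∀ d e f : V, G'.Adj y d → G'.Adj d e → G'.Adj e f →
        y ≠ e → d ≠ f → False := by
      intro d e f h2 h3 h4 hye hdf
      rcases classify d y e h2.symm h3 hye with hd | hd | hd
      · exact h2.ne hd.symm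
      · rw [hd] at h2
        exact (wj_nbr y h2.symm).2 rfl
      · rcases nbr d e h3 with ⟨i, hd', _⟩ | ⟨i, hd', he⟩ | ⟨hd', _⟩ | ⟨hd', _⟩
        · exact hSnW d hd i hd'
        · rcases he with he | ⟨_, he⟩
          · rcases classify e d f h3.symm h4 hdf with he' | he' | he'
            · exact hyW ⟨i, he.symm.trans he'⟩
            · have : i = j := hw (he.symm.trans he')
              exact hnot (by rw [← this, ← hd']; exact hd)
            · exact hSnW e he' i he
          · exact hye he.symm
        · exact hvS (hd' ▸ hd)
        · exact hyS (hd' ▸ hd)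
    rcases p with _ | ⟨h1, _ | ⟨h2, _ | ⟨h3, _ | ⟨h4, _ | ⟨h5, _ | ⟨h6, p⟩⟩⟩⟩⟩⟩ <;>
      simp [Walk.isPath_def] at hp hlen
    rename_i c1 c2 c3 c4
    obtain ⟨⟨hac1, hac2, hac3, hac4, hab⟩, ⟨h12, h13, h14, h1b⟩, ⟨h23, h24, h2b⟩,
      ⟨h34, h3b⟩, h4b⟩ := hp
    rcases classify c2 c1 c3 h2.symm h3 h13 with hc2 | hc2 | hc2
    · rw [hc2] at h3 h24
      exact key c3 c4 b h3 h4 h5 h24 h3b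
    · rcases classify c3 c2 c4 h3.symm h4 h24 with hc3 | hc3 | hc3
      · rw [hc3] at h3 h13
        exact key c2 c1 a h3.symm h2.symm h1.symm (fun h => h13 h.symm) (fun h => hac2 h.symm)
      · exact h23 (hc2.trans hc3.symm)
      · rw [hc2] at h3
        exact (wj_nbr c3 h3).1 hc3
    · rcases classify c3 c2 c4 h3.symm h4 h24 with hc3 | hc3 | hc3
      · rw [hc3] at h3 h13
        exact key c2 c1 a h3.symm h2.symm h1.symm (fun h => h13 h.symm) (fun h => hac2 h.symm)
      · rw [hc3] at h3
        exact (wj_nbr c2 h3.symm).1 hc2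
      · exact noSS c2 c3 hc2 hc3 h3
  · intro hmem
    obtain ⟨s, hsS, hs⟩ := S.exists_mem_ne (by omega) (x (δ j))
    obtain ⟨k, hk⟩ := hS hsS
    set i := δ.symm k with hi
    have hsx : s = x (δ i) := by simp [hi, ← hk]
    have hij : i ≠ j := by
      intro h
      exact hs (by rw [hsx, h])
    have h1 : G'.Adj v (w j) := (hG' _ _).mpr (Or.inr (Or.inl ⟨rfl, rfl⟩))
    have h2 : G'.Adj (w j) (x (δ j)) :=
      (hG' _ _).mpr (Or.inl ((hM _ _).mpr ⟨j, Or.inl ⟨rfl, rfl⟩⟩))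
    have h3 : G'.Adj (x (δ j)) y := (hG' _ _).mpr (Or.inr (Or.inr (Or.inr (Or.inr ⟨rfl, hmem⟩))))
    have h4 : G'.Adj y s := (hG' _ _).mpr (Or.inr (Or.inr (Or.inr (Or.inl ⟨rfl, hsS⟩))))
    have h5 : G'.Adj s (w i) := (hG' _ _).mpr (Or.inl ((hM _ _).mpr ⟨i, Or.inr ⟨rfl, hsx⟩⟩))
    have d1 : v ≠ w j := fun h => hvW ⟨j, h.symm⟩
    have d2 : v ≠ x (δ j) := fun h => hvX ⟨δ j, h.symm⟩
    have d3 : v ≠ s := fun h => hvX ⟨k, hk ▸ h.symm⟩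
    have d4 : v ≠ w i := fun h => hvW ⟨i, h.symm⟩
    have d5 : w j ≠ x (δ j) := hwx' j (δ j)
    have d6 : w j ≠ y := fun h => hyW ⟨j, h⟩
    have d7 : w j ≠ s := fun h => hwx' j k (h.trans hk.symm)
    have d8 : w j ≠ w i := fun h => hij (hw h.symm)
    have d9 : x (δ j) ≠ y := fun h => hyX ⟨δ j, h⟩
    have d10 : x (δ j) ≠ s := fun h => hs h.symm
    have d11 : x (δ j) ≠ w i := fun h => hwx' i (δ j) h.symm
    have d12 : y ≠ s := fun h => hyX ⟨k, hk ▸ h.symm⟩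
    have d13 : y ≠ w i := fun h => hyW ⟨i, h.symm⟩
    have d14 : s ≠ w i := fun h => hwx' i k (h.symm.trans hk.symm)
    refine ⟨v, w i, Walk.cons h1 (Walk.cons h2 (Walk.cons h3 (Walk.cons h4
      (Walk.cons h5 Walk.nil)))), ?_, rfl⟩
    simp [Walk.isPath_def, hvy, d1, d2, d3, d4, d5, d6, d7, d8, d9, d10, d11, d12, d13, d14]
end

section
/- Let Y and W be disjoint finite nonempty sets, let H be a simple bipartite graph with parts Y and W (all edges of H go between Y and W), and fix y_α ∈ Y and w_β ∈ W. Let G be the simple graph obtained from H by adding four new vertices x_1, x_2, z_1, z_2 (distinct and outside Y ∪ W) with the following additional edges: {x_1,x_2}, {z_1,z_2}, an edge from x_1 to every vertex of Y \ {y_α}, and an edge from z_1 to every vertex of W \ {w_β}. Then G has a dominating set of size at most 3 if and only if {y_α, w_β} is an edge of H. -/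
open SimpleGraph

lemma four_mem_ncard {V : Type} [Fintype V] {S : Set V} {a b c d : V}
    (ha : a ∈ S) (hb : b ∈ S) (hc : c ∈ S) (hd : d ∈ S)
    (hab : a ≠ b) (hac : a ≠ c) (had : a ≠ d) (hbc : b ≠ c) (hbd : b ≠ d)
    (hcd : c ≠ d) : 4 ≤ S.ncard := by
  have hsub : ({a, b, c, d} : Set V) ⊆ S := by
    intro v hv
    rcases hv with rfl | rfl | rfl | rfl <;> assumption
  have h4 : ({a, b, c, d} : Set V).ncard = 4 := by
    rw [Set.ncard_insert_of_notMem (by simp [hab, hac, had]),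
      Set.ncard_insert_of_notMem (by simp [hbc, hbd]), Set.ncard_pair hcd]
  rw [← h4]
  exact Set.ncard_le_ncard hsub (Set.toFinite S)

/-- Let `Y`, `W` be disjoint finite nonempty sets, `H` a simple bipartite graph with
parts `Y`, `W`, and fix `yα ∈ Y`, `wβ ∈ W`. Let `G` be obtained from `H` by adding
four new distinct vertices `x₁, x₂, z₁, z₂` outside `Y ∪ W` with additional edges
`{x₁,x₂}`, `{z₁,z₂}`, an edge from `x₁` to every vertex of `Y \ {yα}`, and an edge
from `z₁` to every vertex of `W \ {wβ}`. Then `G` has a dominating set of size at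
most 3 iff `{yα, wβ}` is an edge of `H`. -/
theorem dominating_set_three_iff_edge {V : Type} [Fintype V]
    (H G : SimpleGraph V) (Y W : Set V)
    (hdisj : Disjoint Y W) (hYne : Y.Nonempty) (hWne : W.Nonempty)
    (hparts : ∀ a b : V, H.Adj a b → (a ∈ Y ∧ b ∈ W) ∨ (a ∈ W ∧ b ∈ Y))
    (yα wβ x₁ x₂ z₁ z₂ : V) (hyα : yα ∈ Y) (hwβ : wβ ∈ W)
    (hnew : ({x₁, x₂, z₁, z₂} : Set V) ∩ (Y ∪ W) = ∅)
    (hdistinct : x₁ ≠ x₂ ∧ x₁ ≠ z₁ ∧ x₁ ≠ z₂ ∧ x₂ ≠ z₁ ∧ x₂ ≠ z₂ ∧ z₁ ≠ z₂)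
    (hcover : Y ∪ W ∪ {x₁, x₂, z₁, z₂} = Set.univ)
    (hG : ∀ a b : V, G.Adj a b ↔ H.Adj a b ∨
      (a = x₁ ∧ b = x₂) ∨ (a = x₂ ∧ b = x₁) ∨
      (a = z₁ ∧ b = z₂) ∨ (a = z₂ ∧ b = z₁) ∨
      (a = x₁ ∧ b ∈ Y \ {yα}) ∨ (b = x₁ ∧ a ∈ Y \ {yα}) ∨
      (a = z₁ ∧ b ∈ W \ {wβ}) ∨ (b = z₁ ∧ a ∈ W \ {wβ})) :
    (∃ S : Set V, (∀ a : V, a ∉ S → ∃ b ∈ S, G.Adj a b) ∧ S.ncard ≤ 3) ↔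
      H.Adj yα wβ := by
  obtain ⟨h12, h13, h14, h23, h24, h34⟩ := hdistinct
  -- the new vertices are outside Y ∪ W
  have hnot : ∀ v : V, (v = x₁ ∨ v = x₂ ∨ v = z₁ ∨ v = z₂) → v ∉ Y ∧ v ∉ W := by
    intro v hv
    have h := Set.eq_empty_iff_forall_notMem.mp hnew v
    simp only [Set.mem_inter_iff, Set.mem_insert_iff, Set.mem_singleton_iff,
      Set.mem_union, not_and, not_or] at h
    exact h hv
  have hYnot : ∀ v ∈ Y, v ≠ x₁ ∧ v ≠ x₂ ∧ v ≠ z₁ ∧ v ≠ z₂ := by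
    intro v hvY
    refine ⟨?_, ?_, ?_, ?_⟩ <;> rintro rfl <;>
      exact (hnot v (by tauto)).1 hvY
  have hWnot : ∀ v ∈ W, v ≠ x₁ ∧ v ≠ x₂ ∧ v ≠ z₁ ∧ v ≠ z₂ := by
    intro v hvW
    refine ⟨?_, ?_, ?_, ?_⟩ <;> rintro rfl <;>
      exact (hnot v (by tauto)).2 hvW
  have hyw : yα ≠ wβ := by
    rintro rfl
    exact Set.disjoint_left.mp hdisj hyα hwβ
  have hYW : ∀ v ∈ Y, v ∉ W := fun v hv => Set.disjoint_left.mp hdisj hv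
  constructor
  · rintro ⟨S, hdom, hcard⟩
    -- S must contain x₁ or x₂
    have hp : ∃ p ∈ S, p = x₁ ∨ p = x₂ := by
      by_cases hx2 : x₂ ∈ S
      · exact ⟨x₂, hx2, Or.inr rfl⟩
      · obtain ⟨b, hbS, hadj⟩ := hdom x₂ hx2
        rw [hG] at hadj
        obtain ⟨hx2Y, hx2W⟩ := hnot x₂ (by tauto)
        rcases hadj with h | ⟨h, _⟩ | ⟨_, hb⟩ | ⟨h, _⟩ | ⟨h, _⟩ | ⟨h, _⟩ |
            ⟨_, h, _⟩ | ⟨h, _⟩ | ⟨_, h, _⟩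
        · rcases hparts _ _ h with ⟨h', _⟩ | ⟨h', _⟩
          · exact absurd h' hx2Y
          · exact absurd h' hx2W
        · exact absurd h h12.symm
        · exact ⟨b, hbS, Or.inl hb⟩
        · exact absurd h h23
        · exact absurd h h24
        · exact absurd h h12.symm
        · exact absurd h hx2Y
        · exact absurd h h23
        · exact absurd h hx2W
    -- S must contain z₁ or z₂
    have hq : ∃ q ∈ S, q = z₁ ∨ q = z₂ := by
      by_cases hz2 : z₂ ∈ S
      · exact ⟨z₂, hz2, Or.inr rfl⟩
      · obtain ⟨b, hbS, hadj⟩ := hdom z₂ hz2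
        rw [hG] at hadj
        obtain ⟨hz2Y, hz2W⟩ := hnot z₂ (by tauto)
        rcases hadj with h | ⟨h, _⟩ | ⟨h, _⟩ | ⟨h, _⟩ | ⟨_, hb⟩ | ⟨h, _⟩ |
            ⟨_, h, _⟩ | ⟨h, _⟩ | ⟨_, h, _⟩
        · rcases hparts _ _ h with ⟨h', _⟩ | ⟨h', _⟩
          · exact absurd h' hz2Y
          · exact absurd h' hz2W
        · exact absurd h h14.symm
        · exact absurd h h24.symm
        · exact absurd h h34.symm
        · exact ⟨b, hbS, Or.inl hb⟩
        · exact absurd h h14.symm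
        · exact absurd h hz2Y
        · exact absurd h h34.symm
        · exact absurd h hz2W
    obtain ⟨p, hpS, hp'⟩ := hp
    obtain ⟨q, hqS, hq'⟩ := hq
    have hpq : p ≠ q := by
      rcases hp' with rfl | rfl <;> rcases hq' with rfl | rfl <;> assumption
    have hpY : p ∉ Y := (hnot p (by tauto)).1
    have hpW : p ∉ W := (hnot p (by tauto)).2
    have hqY : q ∉ Y := (hnot q (by tauto)).1
    have hqW : q ∉ W := (hnot q (by tauto)).2
    -- contradiction machinery: if S contains p, q and two more distinct
    -- elements of Y ∪ W, then S.ncard ≥ 4, contradiction.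
    have hcontra : ∀ c d : V, c ∈ S → d ∈ S → c ≠ d →
        c ∈ Y ∪ W → d ∈ Y ∪ W → False := by
      intro c d hc hd hcd hcYW hdYW
      have hpc : p ≠ c := by rintro rfl; rcases hcYW with h | h; exacts [hpY h, hpW h]
      have hpd : p ≠ d := by rintro rfl; rcases hdYW with h | h; exacts [hpY h, hpW h]
      have hqc : q ≠ c := by rintro rfl; rcases hcYW with h | h; exacts [hqY h, hqW h]
      have hqd : q ≠ d := by rintro rfl; rcases hdYW with h | h; exacts [hqY h, hqW h]
      have := four_mem_ncard hpS hqS hc hd hpq hpc hpd hqc hqd hcd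
      omega
    by_cases hy : yα ∈ S
    · by_cases hw : wβ ∈ S
      · exact absurd (hcontra yα wβ hy hw hyw (Or.inl hyα) (Or.inr hwβ)) id
      · -- wβ needs a neighbor in S; it must be yα
        obtain ⟨b, hbS, hadj⟩ := hdom wβ hw
        rw [hG] at hadj
        obtain ⟨hw1, hw2, hw3, hw4⟩ := hWnot wβ hwβ
        rcases hadj with h | ⟨h, _⟩ | ⟨h, _⟩ | ⟨h, _⟩ | ⟨h, _⟩ | ⟨h, _⟩ |
            ⟨_, h, _⟩ | ⟨h, _⟩ | ⟨_, _, h⟩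
        · -- H.Adj wβ b, so b ∈ Y; must have b = yα
          have hbY : b ∈ Y := by
            rcases hparts _ _ h with ⟨h', _⟩ | ⟨_, h'⟩
            · exact absurd hwβ (Set.disjoint_left.mp hdisj h')
            · exact h'
          by_cases hbyα : b = yα
          · subst hbyα; exact (h.symm)
          · exact absurd (hcontra b yα hbS hy hbyα (Or.inl hbY) (Or.inl hyα)) id
        · exact absurd h hw1
        · exact absurd h hw2
        · exact absurd h hw3
        · exact absurd h hw4
        · exact absurd h hw1
        · exact absurd hwβ (Set.disjoint_left.mp hdisj h)
        · exact absurd h hw3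
        · exact absurd rfl h
    · -- yα needs a neighbor b ∈ S ∩ W with H.Adj yα b
      obtain ⟨b, hbS, hadj⟩ := hdom yα hy
      rw [hG] at hadj
      obtain ⟨hy1, hy2, hy3, hy4⟩ := hYnot yα hyα
      have hbW : H.Adj yα b ∧ b ∈ W := by
        rcases hadj with h | ⟨h, _⟩ | ⟨h, _⟩ | ⟨h, _⟩ | ⟨h, _⟩ | ⟨h, _⟩ |
            ⟨_, _, h⟩ | ⟨h, _⟩ | ⟨_, h, _⟩
        · refine ⟨h, ?_⟩
          rcases hparts _ _ h with ⟨_, h'⟩ | ⟨h', _⟩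
          · exact h'
          · exact absurd h' (hYW yα hyα)
        · exact absurd h hy1
        · exact absurd h hy2
        · exact absurd h hy3
        · exact absurd h hy4
        · exact absurd h hy1
        · exact absurd rfl h
        · exact absurd h hy3
        · exact absurd h (hYW yα hyα)
      obtain ⟨hadjb, hbW⟩ := hbW
      by_cases hbwβ : b = wβ
      · subst hbwβ; exact hadjb
      · -- b ∈ W, b ≠ wβ; now wβ also needs domination
        by_cases hw : wβ ∈ S
        · exact absurd (hcontra b wβ hbS hw hbwβ (Or.inr hbW) (Or.inr hwβ)) id
        · obtain ⟨t, htS, hadjt⟩ := hdom wβ hw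
          rw [hG] at hadjt
          obtain ⟨hw1, hw2, hw3, hw4⟩ := hWnot wβ hwβ
          have htY : t ∈ Y := by
            rcases hadjt with h | ⟨h, _⟩ | ⟨h, _⟩ | ⟨h, _⟩ | ⟨h, _⟩ | ⟨h, _⟩ |
                ⟨_, h, _⟩ | ⟨h, _⟩ | ⟨_, _, h⟩
            · rcases hparts _ _ h with ⟨h', _⟩ | ⟨_, h'⟩
              · exact absurd hwβ (Set.disjoint_left.mp hdisj h')
              · exact h'
            · exact absurd h hw1
            · exact absurd h hw2
            · exact absurd h hw3
            · exact absurd h hw4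
            · exact absurd h hw1
            · exact absurd hwβ (Set.disjoint_left.mp hdisj h)
            · exact absurd h hw3
            · exact absurd rfl h
          have hbt : b ≠ t := by
            rintro rfl; exact (hYW b htY) hbW
          exact absurd (hcontra b t hbS htS hbt (Or.inr hbW) (Or.inl htY)) id
  · -- backward: S = {x₁, z₁, yα}
    intro hadj
    refine ⟨{x₁, z₁, yα}, ?_, ?_⟩
    · intro a ha
      simp only [Set.mem_insert_iff, Set.mem_singleton_iff, not_or] at ha
      obtain ⟨ha1, ha2, ha3⟩ := ha
      have hamem : a ∈ Y ∪ W ∪ {x₁, x₂, z₁, z₂} := hcover ▸ Set.mem_univ a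
      rcases hamem with (haY | haW) | hax
      · -- a ∈ Y, a ≠ yα : adjacent to x₁
        refine ⟨x₁, by simp, ?_⟩
        rw [hG]
        exact Or.inr (Or.inr (Or.inr (Or.inr (Or.inr (Or.inr (Or.inl ⟨rfl, haY, ha3⟩))))))
      · by_cases haw : a = wβ
        · subst haw
          refine ⟨yα, by simp, ?_⟩
          rw [hG]
          exact Or.inl hadj.symm
        · refine ⟨z₁, by simp, ?_⟩
          rw [hG]
          exact Or.inr (Or.inr (Or.inr (Or.inr (Or.inr (Or.inr (Or.inr (Or.inr ⟨rfl, haW, haw⟩)))))))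
      · rcases hax with rfl | rfl | rfl | rfl
        · exact absurd rfl ha1
        · exact ⟨x₁, by simp, by rw [hG]; exact Or.inr (Or.inr (Or.inl ⟨rfl, rfl⟩))⟩
        · exact absurd rfl ha2
        · exact ⟨z₁, by simp, by rw [hG]; exact Or.inr (Or.inr (Or.inr (Or.inr (Or.inl ⟨rfl, rfl⟩))))⟩
    · calc ({x₁, z₁, yα} : Set V).ncard ≤ ({z₁, yα} : Set V).ncard + 1 :=
            Set.ncard_insert_le _ _
        _ ≤ ({yα} : Set V).ncard + 1 + 1 := by
            exact Nat.add_le_add_right (Set.ncard_insert_le _ _) 1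
        _ = 3 := by rw [Set.ncard_singleton]
end

section
/- Let m ≥ 1, let B : {1,…,m} × {1,…,m} → {0,1}, and fix i*, j* ∈ {1,…,m}. Consider the 2-CNF formula over Boolean variables x_1,…,x_m, y_1,…,y_m consisting of: for each pair (i,j), the clause (x_i ∨ y_j) if B(i,j)=0 and the clause (¬x_i ∨ y_j) if B(i,j)=1; together with the unit clause (¬y_{j*}) and the clause (x_{i*} ∨ y_{j*}). Then this formula is satisfiable (there exist truth assignments σ, τ : {1,…,m} → {true,false} for the x- and y-variables making every clause true) if and only if B(i*,j*) = 0. -/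
/-- Let `m ≥ 1`, `B : {1,…,m} × {1,…,m} → {0,1}` and fix `i*, j*`. The 2-CNF formula
over variables `x₁,…,x_m, y₁,…,y_m` consisting of, for each pair `(i,j)`, the clause
`(x_i ∨ y_j)` if `B i j = 0` and `(¬x_i ∨ y_j)` if `B i j = 1`, together with the
unit clause `(¬y_{j*})` and the clause `(x_{i*} ∨ y_{j*})`, is satisfiable iff
`B i* j* = 0`. Here `false` plays the role of `0` and `true` of `1`. -/
theorem twoSat_satisfiable_iff (m : ℕ) (hm : 1 ≤ m) (B : Fin m → Fin m → Bool)
    (i' j' : Fin m) :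
    (∃ σ τ : Fin m → Bool,
      (∀ i j : Fin m,
        (B i j = false → (σ i = true ∨ τ j = true)) ∧
        (B i j = true → (σ i = false ∨ τ j = true))) ∧
      τ j' = false ∧ (σ i' = true ∨ τ j' = true)) ↔ B i' j' = false := by
  constructor
  · rintro ⟨σ, τ, hc, hτ, hu⟩
    by_contra hB
    simp only [Bool.not_eq_false] at hB
    rcases (hc i' j').2 hB with h | h
    · rcases hu with h' | h' <;> simp_all
    · simp_all
  · intro hB
    refine ⟨fun i => !(B i j'), fun j => decide (j ≠ j'), fun i j => ?_, by simp, by simp [hB]⟩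
    constructor <;> intro h <;> by_cases hj : j = j' <;> simp_all
end
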